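/- Let φ be a decreasing convex loss and define φ⁻¹(β) = inf{α : φ(α) ≤ β} and Ψ(β) = φ(-φ⁻¹(β)) when φ⁻¹(β) ∈ ℝ, and Ψ(β) = +∞ otherwise. Then Ψ is convex: for all β₁, β₂ with Ψ finite and λ ∈ (0,1), Ψ(λβ₁ + (1-λ)β₂) ≤ λΨ(β₁) + (1-λ)Ψ(β₂). -/

import Mathlib

/-- Lemma 4(b): for a decreasing convex loss `φ`, the function
`Ψ(β) = φ(-φ⁻¹(β))` (where `φ⁻¹(β) = inf {α : φ(α) ≤ β}`) is convex on the set
where it is finite: for all `β₁, β₂` with finite `φ⁻¹` (sublevel sets nonempty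
and bounded below) and `λ ∈ (0,1)`,
`Ψ(λβ₁ + (1-λ)β₂) ≤ λΨ(β₁) + (1-λ)Ψ(β₂)`. -/
theorem stmt_12 (φ : ℝ → ℝ) (hconv : ConvexOn ℝ Set.univ φ)
    (hmono : Antitone φ)
    (φinv Ψ : ℝ → ℝ) (hφinv : ∀ β, φinv β = sInf {α : ℝ | φ α ≤ β})
    (hΨ : ∀ β, Ψ β = φ (-(φinv β))) :
    ∀ β₁ β₂ : ℝ,
      ({α : ℝ | φ α ≤ β₁}).Nonempty → BddBelow {α : ℝ | φ α ≤ β₁} →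
      ({α : ℝ | φ α ≤ β₂}).Nonempty → BddBelow {α : ℝ | φ α ≤ β₂} →
      ∀ l : ℝ, 0 < l → l < 1 →
        Ψ (l * β₁ + (1 - l) * β₂) ≤ l * Ψ β₁ + (1 - l) * Ψ β₂ := by
  intro β₁ β₂ hne₁ hbd₁ hne₂ hbd₂ l hl0 hl1
  have hcont : Continuous φ := by
    rw [← continuousOn_univ]
    exact hconv.continuousOn isOpen_univ
  have hclosed : ∀ β : ℝ, IsClosed {α : ℝ | φ α ≤ β} := fun β =>
    isClosed_Iic.preimage hcont
  -- the infimum belongs to the (closed) sublevel set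
  have hmem : ∀ β : ℝ, ({α : ℝ | φ α ≤ β}).Nonempty → BddBelow {α : ℝ | φ α ≤ β} →
      φ (φinv β) ≤ β := by
    intro β hne hbd
    have := (hclosed β).csInf_mem hne hbd
    rw [hφinv]
    exact this
  set a₁ := φinv β₁
  set a₂ := φinv β₂
  have ha₁ : φ a₁ ≤ β₁ := hmem β₁ hne₁ hbd₁
  have ha₂ : φ a₂ ≤ β₂ := hmem β₂ hne₂ hbd₂
  have hl0' : (0:ℝ) ≤ l := le_of_lt hl0
  have hl1' : (0:ℝ) ≤ 1 - l := by linarith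
  have hsum : l + (1 - l) = 1 := by ring
  -- the convex combination of the infima lies in the mixed sublevel set
  have hmix : φ (l * a₁ + (1 - l) * a₂) ≤ l * β₁ + (1 - l) * β₂ := by
    have := hconv.2 (Set.mem_univ a₁) (Set.mem_univ a₂) hl0' hl1' hsum
    simp only [smul_eq_mul] at this
    calc φ (l * a₁ + (1 - l) * a₂) ≤ l * φ a₁ + (1 - l) * φ a₂ := this
      _ ≤ l * β₁ + (1 - l) * β₂ := by
          have := mul_le_mul_of_nonneg_left ha₁ hl0'
          have := mul_le_mul_of_nonneg_left ha₂ hl1'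
          linarith
  -- hence φinv of the mix is at most the mix of the infima
  have hbdmix : BddBelow {α : ℝ | φ α ≤ l * β₁ + (1 - l) * β₂} := by
    rcases le_total β₁ β₂ with h | h
    · refine hbd₂.mono ?_
      intro x hx
      have : l * β₁ + (1 - l) * β₂ ≤ β₂ := by nlinarith
      exact le_trans hx this
    · refine hbd₁.mono ?_
      intro x hx
      have : l * β₁ + (1 - l) * β₂ ≤ β₁ := by nlinarith
      exact le_trans hx this
  have hinvmix : φinv (l * β₁ + (1 - l) * β₂) ≤ l * a₁ + (1 - l) * a₂ := by
    rw [hφinv]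
    exact csInf_le hbdmix hmix
  -- finish: φ antitone and convex
  rw [hΨ, hΨ, hΨ]
  have hneg : -(l * a₁ + (1 - l) * a₂) ≤ -(φinv (l * β₁ + (1 - l) * β₂)) := by
    linarith
  have h1 : φ (-(φinv (l * β₁ + (1 - l) * β₂))) ≤ φ (-(l * a₁ + (1 - l) * a₂)) :=
    hmono hneg
  have h2 : φ (l * (-a₁) + (1 - l) * (-a₂)) ≤ l * φ (-a₁) + (1 - l) * φ (-a₂) := by
    have := hconv.2 (Set.mem_univ (-a₁)) (Set.mem_univ (-a₂)) hl0' hl1' hsum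
    simpa using this
  have : -(l * a₁ + (1 - l) * a₂) = l * (-a₁) + (1 - l) * (-a₂) := by ring
  rw [this] at h1
  linarith
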